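/- The sequence P_m = ∏_{i=4}^{m} (2^i − 2i − 1)/(2^i − 1), defined for m ≥ 4, is strictly decreasing and converges as m → ∞ to a limit L satisfying 0.19 < L < 0.20. -/

import Mathlib

/-- The coding rate of the interleaved concatenation `H_m ⊗ H_{m-1} ⊗ ⋯ ⊗ H_4`
of distinct quantum Hamming codes: `P m = ∏_{i=4}^{m} (2^i - 2i - 1)/(2^i - 1)`. -/
noncomputable def hammingTowerRate (m : ℕ) : ℝ :=
  ∏ i ∈ Finset.Icc 4 m, ((2 : ℝ) ^ i - 2 * i - 1) / ((2 : ℝ) ^ i - 1)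

/-- The individual factor. -/
noncomputable def hFac (i : ℕ) : ℝ := ((2 : ℝ) ^ i - 2 * i - 1) / ((2 : ℝ) ^ i - 1)

lemma hDen_pos {i : ℕ} (hi : 1 ≤ i) : (0 : ℝ) < (2 : ℝ) ^ i - 1 := by
  have h : (2 : ℝ) ^ 1 ≤ (2 : ℝ) ^ i := pow_le_pow_right₀ (by norm_num) hi
  simp at h; linarith

lemma hNum_pos {i : ℕ} (hi : 4 ≤ i) : (0 : ℝ) < (2 : ℝ) ^ i - 2 * i - 1 := by
  have key : ∀ j : ℕ, (2 * (j + 4) + 1 : ℕ) < 2 ^ (j + 4) := by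
    intro j
    induction j with
    | zero => norm_num
    | succ k ih =>
      have h2 : (2 : ℕ) ≤ 2 ^ (k + 4) :=
        le_trans (by norm_num : (2:ℕ) ≤ 2 ^ 1) (Nat.pow_le_pow_right (by norm_num) (by omega))
      have hpow : 2 ^ (k + 1 + 4) = 2 ^ (k + 4) + 2 ^ (k + 4) := by ring
      omega
  obtain ⟨j, rfl⟩ : ∃ j, i = j + 4 := ⟨i - 4, by omega⟩
  have h := key j
  have hcast : ((2 * (j + 4) + 1 : ℕ) : ℝ) < ((2 ^ (j + 4) : ℕ) : ℝ) := by exact_mod_cast h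
  push_cast at hcast ⊢
  linarith

lemma hFac_pos {i : ℕ} (hi : 4 ≤ i) : 0 < hFac i :=
  div_pos (hNum_pos hi) (hDen_pos (by omega))

lemma hFac_lt_one {i : ℕ} (hi : 4 ≤ i) : hFac i < 1 := by
  rw [hFac, div_lt_one (hDen_pos (by omega))]
  have h : (1 : ℝ) ≤ (i : ℝ) := by exact_mod_cast (by omega : 1 ≤ i)
  linarith

lemma hFac_le_one {i : ℕ} (hi : 4 ≤ i) : hFac i ≤ 1 := (hFac_lt_one hi).le

lemma P_eq_Ioc (m : ℕ) : hammingTowerRate m = ∏ i ∈ Finset.Ioc 3 m, hFac i := by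
  rw [hammingTowerRate, ← Finset.Icc_add_one_left_eq_Ioc]; rfl

lemma P_succ {m : ℕ} (h : 3 ≤ m) :
    hammingTowerRate (m + 1) = hammingTowerRate m * hFac (m + 1) := by
  rw [hammingTowerRate, hammingTowerRate,
    Finset.prod_Icc_succ_top (by omega : 4 ≤ m + 1)]
  rfl

lemma P_pos (m : ℕ) : 0 < hammingTowerRate m := by
  rw [hammingTowerRate]
  apply Finset.prod_pos
  intro i hi
  rw [Finset.mem_Icc] at hi
  exact hFac_pos hi.1

lemma P_anti : Antitone hammingTowerRate := by
  apply antitone_nat_of_succ_le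
  intro n
  rcases le_or_gt 3 n with hn | hn
  · rw [P_succ hn]
    exact mul_le_of_le_one_right (P_pos n).le (hFac_le_one (by omega))
  · have h1 : Finset.Icc 4 (n + 1) = ∅ := Finset.Icc_eq_empty (by omega)
    have h2 : Finset.Icc 4 n = ∅ := Finset.Icc_eq_empty (by omega)
    rw [hammingTowerRate, hammingTowerRate, h1, h2]

/-- Weierstrass product inequality. -/
lemma weier (s : Finset ℕ) (f : ℕ → ℝ) (h0 : ∀ i ∈ s, 0 ≤ f i) (h1 : ∀ i ∈ s, f i ≤ 1) :
    1 - ∑ i ∈ s, f i ≤ ∏ i ∈ s, (1 - f i) := by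
  induction s using Finset.cons_induction with
  | empty => simp
  | cons a s ha ih =>
    rw [Finset.prod_cons, Finset.sum_cons]
    have h0a : 0 ≤ f a := h0 a (Finset.mem_cons_self a s)
    have h1a : f a ≤ 1 := h1 a (Finset.mem_cons_self a s)
    have ihs : 1 - ∑ i ∈ s, f i ≤ ∏ i ∈ s, (1 - f i) :=
      ih (fun i hi => h0 i (Finset.mem_cons_of_mem hi))
        (fun i hi => h1 i (Finset.mem_cons_of_mem hi))
    have hsum : 0 ≤ ∑ i ∈ s, f i :=
      Finset.sum_nonneg fun i hi => h0 i (Finset.mem_cons_of_mem hi)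
    nlinarith [mul_le_mul_of_nonneg_left ihs (sub_nonneg.2 h1a), mul_nonneg h0a hsum]

lemma tail_sum_id : ∀ m : ℕ, 12 ≤ m →
    ∑ i ∈ Finset.Ioc 12 m, (i : ℝ) / 2 ^ i = 14 / 2 ^ 12 - ((m : ℝ) + 2) / 2 ^ m := by
  intro m hm
  induction m, hm using Nat.le_induction with
  | base => norm_num
  | succ b hb ih =>
    rw [Finset.sum_Ioc_succ_top (by omega) _, ih]
    have hb2 : (2 : ℝ) ^ b ≠ 0 := by positivity
    have hp : (2 : ℝ) ^ (b + 1) = 2 * 2 ^ b := by ring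
    rw [hp]
    push_cast
    field_simp
    ring

theorem hammingTowerRate_strictAnti_and_tendsto :
    StrictAntiOn hammingTowerRate (Set.Ici 4) ∧
    ∃ L : ℝ, Filter.Tendsto hammingTowerRate Filter.atTop (nhds L) ∧
      0.19 < L ∧ L < 0.20 := by
  -- exact values of P 11 and P 12
  have h3 : hammingTowerRate 3 = 1 := by
    rw [hammingTowerRate, Finset.Icc_eq_empty (by omega), Finset.prod_empty]
  have h4 : hammingTowerRate 4 = hFac 4 := by
    have h := P_succ (le_refl 3); rw [h3, one_mul] at h; exact h
  have h5 : hammingTowerRate 5 = hammingTowerRate 4 * hFac 5 := P_succ (by norm_num)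
  have h6 : hammingTowerRate 6 = hammingTowerRate 5 * hFac 6 := P_succ (by norm_num)
  have h7 : hammingTowerRate 7 = hammingTowerRate 6 * hFac 7 := P_succ (by norm_num)
  have h8 : hammingTowerRate 8 = hammingTowerRate 7 * hFac 8 := P_succ (by norm_num)
  have h9 : hammingTowerRate 9 = hammingTowerRate 8 * hFac 9 := P_succ (by norm_num)
  have h10 : hammingTowerRate 10 = hammingTowerRate 9 * hFac 10 := P_succ (by norm_num)
  have h11 : hammingTowerRate 11 = hammingTowerRate 10 * hFac 11 := P_succ (by norm_num)
  have h12 : hammingTowerRate 12 = hammingTowerRate 11 * hFac 12 := P_succ (by norm_num)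
  have v11 : hammingTowerRate 11 =
      7/15 * (21/31) * (51/63) * (113/127) * (239/255) * (493/511) * (1003/1023) * (2025/2047) := by
    rw [h11, h10, h9, h8, h7, h6, h5, h4]
    norm_num [hFac]
  have v12 : hammingTowerRate 12 =
      7/15 * (21/31) * (51/63) * (113/127) * (239/255) * (493/511) * (1003/1023) * (2025/2047)
        * (4071/4095) := by
    rw [h12, v11]
    norm_num [hFac]
  constructor
  · -- strict antitonicity
    intro a ha b hb hab
    simp only [Set.mem_Ici] at ha hb
    clear hb
    induction b, hab using Nat.le_induction with
    | base =>
      rw [P_succ (by omega)]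
      exact mul_lt_of_lt_one_right (P_pos a) (hFac_lt_one (by omega))
    | succ c hc ih =>
      exact (P_anti (Nat.le_succ c)).trans_lt ih
  · -- convergence
    have hbdd : BddBelow (Set.range hammingTowerRate) := by
      refine ⟨0, ?_⟩
      rintro x ⟨n, rfl⟩
      exact (P_pos n).le
    refine ⟨⨅ n, hammingTowerRate n, tendsto_atTop_ciInf P_anti hbdd, ?_, ?_⟩
    · -- lower bound
      have key : ∀ m : ℕ, 12 ≤ m →
          hammingTowerRate 12 * (1 - 56 / 4096) ≤ hammingTowerRate m := by
        intro m hm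
        have hsplit : hammingTowerRate m
            = hammingTowerRate 12 * ∏ i ∈ Finset.Ioc 12 m, hFac i := by
          rw [P_eq_Ioc, P_eq_Ioc, ← Finset.prod_Ioc_consecutive _ (by omega : 3 ≤ 12) hm]
        have hQ : (1 : ℝ) - 56 / 4096 ≤ ∏ i ∈ Finset.Ioc 12 m, hFac i := by
          have hW : 1 - ∑ i ∈ Finset.Ioc 12 m, (1 - hFac i) ≤
              ∏ i ∈ Finset.Ioc 12 m, (1 - (1 - hFac i)) := by
            apply weier
            · intro i hi
              rw [Finset.mem_Ioc] at hi
              linarith [hFac_lt_one (show 4 ≤ i by omega)]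
            · intro i hi
              rw [Finset.mem_Ioc] at hi
              linarith [hFac_pos (show 4 ≤ i by omega)]
          simp only [sub_sub_cancel] at hW
          refine le_trans ?_ hW
          have hsum_le : ∑ i ∈ Finset.Ioc 12 m, (1 - hFac i) ≤
              ∑ i ∈ Finset.Ioc 12 m, 4 * ((i : ℝ) / 2 ^ i) := by
            apply Finset.sum_le_sum
            intro i hi
            rw [Finset.mem_Ioc] at hi
            have hD := hDen_pos (show 1 ≤ i by omega)
            have hPow : (0 : ℝ) < 2 ^ i := by positivity
            have h1f : 1 - hFac i = 2 * i / (2 ^ i - 1) := by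
              rw [hFac]; field_simp; ring
            rw [h1f, mul_div_assoc' 4 _ _, div_le_div_iff₀ hD hPow]
            have h2 : (2 : ℝ) ≤ 2 ^ i := by
              calc (2 : ℝ) = 2 ^ 1 := by norm_num
                _ ≤ 2 ^ i := pow_le_pow_right₀ (by norm_num) (by omega)
            have hi1 : (1 : ℝ) ≤ (i : ℝ) := by exact_mod_cast (by omega : 1 ≤ i)
            nlinarith
          have hsum4 : ∑ i ∈ Finset.Ioc 12 m, 4 * ((i : ℝ) / 2 ^ i) ≤ 56 / 4096 := by
            rw [← Finset.mul_sum, tail_sum_id m hm]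
            have hX : (0 : ℝ) ≤ ((m : ℝ) + 2) / 2 ^ m := by positivity
            have h212 : (2 : ℝ) ^ (12 : ℕ) = 4096 := by norm_num
            rw [h212]
            linarith
          linarith
        rw [hsplit]
        exact mul_le_mul_of_nonneg_left hQ (P_pos 12).le
      have hall : ∀ n, hammingTowerRate 12 * (1 - 56 / 4096) ≤ hammingTowerRate n := by
        intro n
        rcases le_or_gt 12 n with hn | hn
        · exact key n hn
        · calc hammingTowerRate 12 * (1 - 56 / 4096) ≤ hammingTowerRate 12 := by
                nlinarith [P_pos 12]
            _ ≤ hammingTowerRate n := P_anti hn.le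
      have hle : hammingTowerRate 12 * (1 - 56 / 4096) ≤ ⨅ n, hammingTowerRate n :=
        le_ciInf hall
      have hnum : (0.19 : ℝ) < hammingTowerRate 12 * (1 - 56 / 4096) := by
        rw [v12]; norm_num
      linarith
    · -- upper bound
      have hle : (⨅ n, hammingTowerRate n) ≤ hammingTowerRate 11 := ciInf_le hbdd 11
      have hnum : hammingTowerRate 11 < (0.20 : ℝ) := by
        rw [v11]; norm_num
      linarith
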